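/- Along an order-1 boundary arc, vanishing of H₀₁ can occur only at the endpoints: let z(·) = (x(·),p(·)) solve the Hamiltonian system of H_{c₁} on [t₁,t₂] with g₁(x(t)) = 0, H₁(z(t)) = 0 and H₀₁(z(t)) ≤ 0 for all t ∈ [t₁,t₂] (the multiplier η_{c₁} = H₀₁/c₇ is nonpositive), and with p(t) ≠ 0 for all t. If τ ∈ [t₁,t₂] satisfies H₀₁(z(τ)) = 0, then τ = t₁ or τ = t₂. -/

import Mathlib

noncomputable section

/-- Drift vector field of the electric vehicle. -/
def F0 (c1 c2 c3 c4 c5 c6 : ℝ) (x : Fin 3 → ℝ) : Fin 3 → ℝ :=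
  ![c1 * x 0 + c2 * x 2, c3 * x 2, c4 + c5 * x 0 + c6 * (x 2) ^ 2]

/-- Control vector field of the electric vehicle. -/
def F1 (c7 : ℝ) (_x : Fin 3 → ℝ) : Fin 3 → ℝ := ![c7, 0, 0]

/-- The Hamiltonian vector field `X_h = (∂h/∂p, −∂h/∂x)` of a function `h`
on `ℝ³ × ℝ³` (coordinates `(x, p)`). -/
def Xham (h : (Fin 3 → ℝ) × (Fin 3 → ℝ) → ℝ) (z : (Fin 3 → ℝ) × (Fin 3 → ℝ)) :
    (Fin 3 → ℝ) × (Fin 3 → ℝ) :=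
  (fun i => fderiv ℝ h z ((0 : Fin 3 → ℝ), Pi.single i (1:ℝ)),
   fun i => -fderiv ℝ h z (Pi.single i (1:ℝ), (0 : Fin 3 → ℝ)))

/-- Hamiltonian lift `H₀(x,p) = ⟨p, F₀(x)⟩`. -/
def H0 (c1 c2 c3 c4 c5 c6 : ℝ) (z : (Fin 3 → ℝ) × (Fin 3 → ℝ)) : ℝ :=
  ∑ i, z.2 i * F0 c1 c2 c3 c4 c5 c6 z.1 i

/-- Hamiltonian lift `H₁(x,p) = ⟨p, F₁(x)⟩ = c₇ p₁`. -/
def H1 (c7 : ℝ) (z : (Fin 3 → ℝ) × (Fin 3 → ℝ)) : ℝ := c7 * z.2 0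

/-- `H₀₁(x,p) = ⟨p, [F₀,F₁](x)⟩ = −c₇(c₁p₁ + c₅p₃)`. -/
def H01 (c1 c5 c7 : ℝ) (z : (Fin 3 → ℝ) × (Fin 3 → ℝ)) : ℝ :=
  -(c7 * (c1 * z.2 0 + c5 * z.2 2))

/-- Feedback boundary control of the order-1 constraint `g₁(x) = x₁ − 1`. -/
def uc1 (c1 c2 c7 : ℝ) (x : Fin 3 → ℝ) : ℝ := -(c1 + c2 * x 2) / c7

/-- Multiplier of the order-1 constraint. -/
def etac1 (c5 : ℝ) (z : (Fin 3 → ℝ) × (Fin 3 → ℝ)) : ℝ := -(c5 * z.2 2)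

/-- True Hamiltonian of the order-1 boundary arc:
`H_{c₁} = H₀ + u_{c₁}H₁ + η_{c₁} g₁`. -/
def Hc1 (c1 c2 c3 c4 c5 c6 c7 : ℝ) (z : (Fin 3 → ℝ) × (Fin 3 → ℝ)) : ℝ :=
  H0 c1 c2 c3 c4 c5 c6 z + uc1 c1 c2 c7 z.1 * H1 c7 z + etac1 c5 z * (z.1 0 - 1)

/-- Along an order-1 boundary arc (solution of the flow of `H_{c₁}` on
`[t₁,t₂]` with `g₁ = 0`, `H₁ = 0`, nonpositive multiplier `H₀₁ ≤ 0` and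
nonvanishing adjoint vector), `H₀₁` can vanish only at the endpoints. -/
theorem stmt19 (c1 c2 c3 c4 c5 c6 c7 : ℝ)
    (h1 : c1 < 0) (h2 : c2 < 0) (h3 : 0 < c3) (h4 : c4 < 0)
    (h5 : 0 < c5) (h6 : c6 < 0) (h7 : 0 < c7)
    (t1 t2 : ℝ)
    (z : ℝ → (Fin 3 → ℝ) × (Fin 3 → ℝ))
    (hz : ∀ t ∈ Set.Icc t1 t2,
      HasDerivWithinAt z (Xham (Hc1 c1 c2 c3 c4 c5 c6 c7) (z t)) (Set.Icc t1 t2) t)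
    (hg : ∀ t ∈ Set.Icc t1 t2, (z t).1 0 - 1 = 0)
    (hH1 : ∀ t ∈ Set.Icc t1 t2, H1 c7 (z t) = 0)
    (hH01 : ∀ t ∈ Set.Icc t1 t2, H01 c1 c5 c7 (z t) ≤ 0)
    (hp : ∀ t ∈ Set.Icc t1 t2, (z t).2 ≠ 0)
    (τ : ℝ) (hτ : τ ∈ Set.Icc t1 t2) (h0 : H01 c1 c5 c7 (z τ) = 0) :
    τ = t1 ∨ τ = t2 := by
  by_contra hne
  push_neg at hne
  obtain ⟨hne1, hne2⟩ := hne
  have hc7 : c7 ≠ 0 := ne_of_gt h7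
  -- p₀ = 0 along the arc
  have hp0 : ∀ t ∈ Set.Icc t1 t2, (z t).2 0 = 0 := by
    intro t ht
    have h := hH1 t ht
    simp only [H1] at h
    exact (mul_eq_zero.mp h).resolve_left hc7
  -- p₂ ≥ 0 along the arc
  have hp2nn : ∀ t ∈ Set.Icc t1 t2, 0 ≤ (z t).2 2 := by
    intro t ht
    have h := hH01 t ht
    simp only [H01, hp0 t ht] at h
    nlinarith [mul_pos h7 h5]
  have hp2τ : (z τ).2 2 = 0 := by
    have h := h0
    simp only [H01, hp0 τ hτ] at h
    nlinarith [mul_pos h7 h5]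
  have hp1τ : (z τ).2 1 ≠ 0 := by
    intro h
    apply hp τ hτ
    funext i
    fin_cases i <;> simp_all
  -- simplified form of the Hamiltonian
  have hHeq : Hc1 c1 c2 c3 c4 c5 c6 c7 = fun w : (Fin 3 → ℝ) × (Fin 3 → ℝ) =>
      c1 * w.2 0 * (w.1 0 - 1) + c3 * w.2 1 * w.1 2
        + w.2 2 * (c4 + c5 + c6 * (w.1 2 * w.1 2)) := by
    funext w
    simp only [Hc1, H0, H1, uc1, etac1, F0, Fin.sum_univ_three]
    simp only [Matrix.cons_val_zero, Matrix.cons_val_one, Matrix.head_cons,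
      Matrix.cons_val_two, Matrix.tail_cons]
    field_simp
    ring
  -- coordinate projections as continuous linear maps
  let X0 : ((Fin 3 → ℝ) × (Fin 3 → ℝ)) →L[ℝ] ℝ := (ContinuousLinearMap.proj 0).comp (ContinuousLinearMap.fst ℝ (Fin 3 → ℝ) (Fin 3 → ℝ))
  let X2 : ((Fin 3 → ℝ) × (Fin 3 → ℝ)) →L[ℝ] ℝ := (ContinuousLinearMap.proj 2).comp (ContinuousLinearMap.fst ℝ (Fin 3 → ℝ) (Fin 3 → ℝ))
  let P0 : ((Fin 3 → ℝ) × (Fin 3 → ℝ)) →L[ℝ] ℝ := (ContinuousLinearMap.proj 0).comp (ContinuousLinearMap.snd ℝ (Fin 3 → ℝ) (Fin 3 → ℝ))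
  let P1 : ((Fin 3 → ℝ) × (Fin 3 → ℝ)) →L[ℝ] ℝ := (ContinuousLinearMap.proj 1).comp (ContinuousLinearMap.snd ℝ (Fin 3 → ℝ) (Fin 3 → ℝ))
  let P2 : ((Fin 3 → ℝ) × (Fin 3 → ℝ)) →L[ℝ] ℝ := (ContinuousLinearMap.proj 2).comp (ContinuousLinearMap.snd ℝ (Fin 3 → ℝ) (Fin 3 → ℝ))
  have hX0 : HasFDerivAt (fun w : (Fin 3 → ℝ) × (Fin 3 → ℝ) => w.1 0) X0 (z τ) := X0.hasFDerivAt
  have hX2 : HasFDerivAt (fun w : (Fin 3 → ℝ) × (Fin 3 → ℝ) => w.1 2) X2 (z τ) := X2.hasFDerivAt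
  have hP0 : HasFDerivAt (fun w : (Fin 3 → ℝ) × (Fin 3 → ℝ) => w.2 0) P0 (z τ) := P0.hasFDerivAt
  have hP1 : HasFDerivAt (fun w : (Fin 3 → ℝ) × (Fin 3 → ℝ) => w.2 1) P1 (z τ) := P1.hasFDerivAt
  have hP2 : HasFDerivAt (fun w : (Fin 3 → ℝ) × (Fin 3 → ℝ) => w.2 2) P2 (z τ) := P2.hasFDerivAt
  have hd := (((hP0.const_mul c1).mul (hX0.sub_const 1)).add
      ((hP1.const_mul c3).mul hX2)).add
      (hP2.mul (((hX2.mul hX2).const_mul c6).const_add (c4 + c5)))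
  have hval : fderiv ℝ (Hc1 c1 c2 c3 c4 c5 c6 c7) (z τ)
      ((Pi.single 2 (1:ℝ), (0 : Fin 3 → ℝ))) = c3 * (z τ).2 1 := by
    rw [hHeq, (show HasFDerivAt (fun w : (Fin 3 → ℝ) × (Fin 3 → ℝ) => c1 * w.2 0 * (w.1 0 - 1) + c3 * w.2 1 * w.1 2 + w.2 2 * (c4 + c5 + c6 * (w.1 2 * w.1 2))) _ (z τ) from hd).fderiv]
    simp [X0, X2, P0, P1, P2, Pi.single_apply, hp2τ]
  -- derivative of p₂ along the arc at τ
  have hg2 : HasDerivWithinAt (fun t => (z t).2 2) (-(c3 * (z τ).2 1)) (Set.Icc t1 t2) τ := by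
    have h := P2.hasFDerivAt.comp_hasDerivWithinAt τ (hz τ hτ)
    have heq : P2 (Xham (Hc1 c1 c2 c3 c4 c5 c6 c7) (z τ)) = -(c3 * (z τ).2 1) := by
      show (Xham (Hc1 c1 c2 c3 c4 c5 c6 c7) (z τ)).2 2 = _
      rw [Xham]
      simp only
      rw [hval]
    rw [heq] at h
    exact h
  have hτint : τ ∈ Set.Ioo t1 t2 :=
    ⟨lt_of_le_of_ne hτ.1 (Ne.symm hne1), lt_of_le_of_ne hτ.2 hne2⟩
  have hnhds : Set.Icc t1 t2 ∈ nhds τ := Icc_mem_nhds hτint.1 hτint.2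
  have hg3 : HasDerivAt (fun t => (z t).2 2) (-(c3 * (z τ).2 1)) τ := hg2.hasDerivAt hnhds
  have hmin : IsLocalMin (fun t => (z t).2 2) τ := by
    filter_upwards [hnhds] with t ht
    simp only [hp2τ]
    exact hp2nn t ht
  have hz0 := hmin.hasDerivAt_eq_zero hg3
  have : (z τ).2 1 = 0 := by
    have : c3 * (z τ).2 1 = 0 := by linarith
    exact (mul_eq_zero.mp this).resolve_left (ne_of_gt h3)
  exact hp1τ this
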